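/- Let 𝒢 be a finite groupoid and ω a normalized U(1)-valued 3-cocycle on 𝒢, and let A = ℂ[Λ𝒢]^{t(ω)} be the twisted groupoid algebra of the loop groupoid with respect to the transgressed 2-cocycle t(ω). Then the linear map Δ : A → A ⊗_ℂ A defined on basis vectors by Δ(|g → a⟩) = Σ_{g₁, g₂ ∈ End_𝒢(s(a)), g₁g₂ = g} γ_a(g₁,g₂) |g₁ → a⟩ ⊗ |g₂ → a⟩ is multiplicative: Δ(x ⋆ y) = Δ(x) ⋆ Δ(y) for all x, y ∈ A (where A ⊗_ℂ A carries the componentwise product). -/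

import Mathlib

open CategoryTheory

/-- A normalized `U(1)`-valued 3-cocycle on a groupoid `G`. -/
structure ThreeCocycle (G : Type) [Groupoid.{0} G] : Type where
  toFun : ∀ {X Y Z W : G}, (X ⟶ Y) → (Y ⟶ Z) → (Z ⟶ W) → ℂ
  abs_toFun : ∀ {X Y Z W : G} (f : X ⟶ Y) (g : Y ⟶ Z) (h : Z ⟶ W),
    ‖toFun f g h‖ = 1
  cocycle : ∀ {X₀ X₁ X₂ X₃ X₄ : G} (f : X₀ ⟶ X₁) (g : X₁ ⟶ X₂) (h : X₂ ⟶ X₃) (k : X₃ ⟶ X₄),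
    toFun g h k * toFun f (g ≫ h) k * toFun f g h
      = toFun (f ≫ g) h k * toFun f g (h ≫ k)
  id_fst : ∀ {X Y Z : G} (g : X ⟶ Y) (h : Y ⟶ Z), toFun (𝟙 X) g h = 1
  id_snd : ∀ {X Y Z : G} (g : X ⟶ Y) (h : Y ⟶ Z), toFun g (𝟙 Y) h = 1
  id_thd : ∀ {X Y Z : G} (g : X ⟶ Y) (h : Y ⟶ Z), toFun g h (𝟙 Z) = 1

/-- Conjugation `a⁻¹ g a` of a loop `g ∈ End(X)` by a morphism `a : X ⟶ Y`. -/
def cnj {G : Type} [Groupoid.{0} G] {X Y : G} (g : X ⟶ X) (a : X ⟶ Y) : Y ⟶ Y :=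
  Groupoid.inv a ≫ g ≫ a

/-- `γ_a(g₁,g₂) = ω(g₁,g₂,a) ω(a, a⁻¹g₁a, a⁻¹g₂a) ω(g₁, a, a⁻¹g₂a)⁻¹`. -/
noncomputable def gam {G : Type} [Groupoid.{0} G] (ω : ThreeCocycle G)
    {X Y : G} (a : X ⟶ Y) (g₁ g₂ : X ⟶ X) : ℂ :=
  ω.toFun g₁ g₂ a * ω.toFun a (cnj g₁ a) (cnj g₂ a) * (ω.toFun g₁ a (cnj g₂ a))⁻¹

/-- The `S¹`-transgression `t(ω)` of a 3-cocycle `ω`, evaluated on the composable pair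
`(g → a, a⁻¹ga → b)` of morphisms of the loop groupoid `Λ𝒢`:
`t(ω)(g → a, a⁻¹ga → b) = ω(g,a,b) ω(a,b,(ab)⁻¹g(ab)) ω(a, a⁻¹ga, b)⁻¹`. -/
noncomputable def tOmega {G : Type} [Groupoid.{0} G] (ω : ThreeCocycle G)
    {X Y Z : G} (g : X ⟶ X) (a : X ⟶ Y) (b : Y ⟶ Z) : ℂ :=
  ω.toFun g a b * ω.toFun a b (cnj g (a ≫ b)) * (ω.toFun a (cnj g a) b)⁻¹

/-- The morphisms `(g → a)` of the loop groupoid `Λ𝒢`: a loop `g ∈ End(X)` together with a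
morphism `a : X ⟶ Y` of `𝒢`. -/
abbrev LMor (G : Type) [Groupoid.{0} G] : Type := Σ X Y : G, (X ⟶ X) × (X ⟶ Y)

section

variable {G : Type} [Groupoid.{0} G] [Fintype G]
    [∀ X Y : G, Fintype (X ⟶ Y)] [DecidableEq G] [∀ X Y : G, DecidableEq (X ⟶ Y)]

/-- The basis vector `|g → a⟩` of the twisted groupoid algebra `ℂ[Λ𝒢]^{t(ω)}`. -/
noncomputable def lbv (p : LMor G) : LMor G → ℂ := fun m => if m = p then 1 else 0

/-- The product of the twisted groupoid algebra `A = ℂ[Λ𝒢]^{t(ω)}`, on coordinates with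
respect to the basis `|g → a⟩`:
`|g → a⟩ ⋆ |g' → a'⟩ = δ_{g', a⁻¹ga} t(ω)(g → a, a⁻¹ga → a') |g → aa'⟩`. -/
noncomputable def lmul (ω : ThreeCocycle G) (x y : LMor G → ℂ) : LMor G → ℂ :=
  fun m => ∑ Y : G, ∑ a : m.1 ⟶ Y, ∑ b : Y ⟶ m.2.1,
    (if a ≫ b = m.2.2.2 then tOmega ω m.2.2.1 a b else 0) *
      x ⟨m.1, Y, (m.2.2.1, a)⟩ * y ⟨Y, m.2.1, (cnj m.2.2.1 a, b)⟩

/-- The basis vector `|g₁ → a₁⟩ ⊗ |g₂ → a₂⟩` of `A ⊗_ℂ A` (realized as functions on pairs). -/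
noncomputable def lbv2 (p : LMor G × LMor G) : LMor G × LMor G → ℂ :=
  fun m => if m = p then 1 else 0

/-- The componentwise product on `A ⊗_ℂ A`, realized as functions on pairs of morphisms of
`Λ𝒢`. -/
noncomputable def lmul2 (ω : ThreeCocycle G) (x y : LMor G × LMor G → ℂ) :
    LMor G × LMor G → ℂ :=
  fun m =>
    ∑ Y₁ : G, ∑ a₁ : m.1.1 ⟶ Y₁, ∑ b₁ : Y₁ ⟶ m.1.2.1,
    ∑ Y₂ : G, ∑ a₂ : m.2.1 ⟶ Y₂, ∑ b₂ : Y₂ ⟶ m.2.2.1,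
      (if a₁ ≫ b₁ = m.1.2.2.2 then tOmega ω m.1.2.2.1 a₁ b₁ else 0) *
      (if a₂ ≫ b₂ = m.2.2.2.2 then tOmega ω m.2.2.2.1 a₂ b₂ else 0) *
      x (⟨m.1.1, Y₁, (m.1.2.2.1, a₁)⟩, ⟨m.2.1, Y₂, (m.2.2.2.1, a₂)⟩) *
      y (⟨Y₁, m.1.2.1, (cnj m.1.2.2.1 a₁, b₁)⟩, ⟨Y₂, m.2.2.1, (cnj m.2.2.2.1 a₂, b₂)⟩)

/-- The comultiplication `Δ` of `A = ℂ[Λ𝒢]^{t(ω)}`: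
`Δ(|g → a⟩) = ∑_{g₁g₂ = g} γ_a(g₁,g₂) |g₁ → a⟩ ⊗ |g₂ → a⟩`. -/
noncomputable def Delta (ω : ThreeCocycle G) (x : LMor G → ℂ) : LMor G × LMor G → ℂ :=
  ∑ X : G, ∑ Y : G, ∑ a : X ⟶ Y, ∑ g₁ : X ⟶ X, ∑ g₂ : X ⟶ X,
    (gam ω a g₁ g₂ * x ⟨X, Y, (g₁ ≫ g₂, a)⟩) •
      lbv2 (⟨X, Y, (g₁, a)⟩, ⟨X, Y, (g₂, a)⟩)

end

section Key

variable {G : Type} [Groupoid.{0} G]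

variable {G : Type} [Groupoid.{0} G]

lemma tf_ne (ω : ThreeCocycle G) {X Y Z W : G} (f : X ⟶ Y) (g : Y ⟶ Z) (h : Z ⟶ W) :
    ω.toFun f g h ≠ 0 := by
  intro h0
  have := ω.abs_toFun f g h
  rw [h0] at this
  simp at this

lemma cnj_comp {X Y Z : G} (g : X ⟶ X) (u : X ⟶ Y) (v : Y ⟶ Z) :
    cnj g (u ≫ v) = cnj (cnj g u) v := by
  simp [cnj, Groupoid.inv_eq_inv]

lemma cnj_mul {X Y : G} (g₁ g₂ : X ⟶ X) (u : X ⟶ Y) :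
    cnj (g₁ ≫ g₂) u = cnj g₁ u ≫ cnj g₂ u := by
  simp [cnj, Groupoid.inv_eq_inv]

lemma keyid (ω : ThreeCocycle G) {X Z Y : G} (u : X ⟶ Z) (v : Z ⟶ Y) (g₁ g₂ : X ⟶ X) :
    gam ω (u ≫ v) g₁ g₂ * tOmega ω (g₁ ≫ g₂) u v
      = tOmega ω g₁ u v * tOmega ω g₂ u v * gam ω u g₁ g₂ *
        gam ω v (cnj g₁ u) (cnj g₂ u) := by
  have P1 := ω.cocycle g₁ g₂ u v
  have P2 := ω.cocycle g₁ u v (inv v ≫ inv u ≫ g₂ ≫ u ≫ v)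
  have P3 := ω.cocycle g₁ u (inv u ≫ g₂ ≫ u) v
  have P4 := ω.cocycle u v (inv v ≫ inv u ≫ g₁ ≫ u ≫ v) (inv v ≫ inv u ≫ g₂ ≫ u ≫ v)
  have P5 := ω.cocycle u (inv u ≫ g₁ ≫ u) v (inv v ≫ inv u ≫ g₂ ≫ u ≫ v)
  have P6 := ω.cocycle u (inv u ≫ g₁ ≫ u) (inv u ≫ g₂ ≫ u) v
  simp only [Category.assoc, IsIso.hom_inv_id_assoc, IsIso.inv_hom_id_assoc,
    Category.comp_id, Category.id_comp] at P1 P2 P3 P4 P5 P6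
  have H : ((ω.toFun (g₁ ≫ g₂) (u) (v) * ω.toFun (g₁) (g₂) (u ≫ v)) * (ω.toFun (g₁ ≫ u) (v) (inv v ≫ inv u ≫ g₂ ≫ u ≫ v) * ω.toFun (g₁) (u) (inv u ≫ g₂ ≫ u ≫ v)) * (ω.toFun (u) (inv u ≫ g₂ ≫ u) (v) * ω.toFun (g₁) (g₂ ≫ u) (v) * ω.toFun (g₁) (u) (inv u ≫ g₂ ≫ u)) * (ω.toFun (u ≫ v) (inv v ≫ inv u ≫ g₁ ≫ u ≫ v) (inv v ≫ inv u ≫ g₂ ≫ u ≫ v) * ω.toFun (u) (v) (inv v ≫ inv u ≫ g₁ ≫ g₂ ≫ u ≫ v)) * (ω.toFun (inv u ≫ g₁ ≫ u) (v) (inv v ≫ inv u ≫ g₂ ≫ u ≫ v) * ω.toFun (u) (inv u ≫ g₁ ≫ u ≫ v) (inv v ≫ inv u ≫ g₂ ≫ u ≫ v) * ω.toFun (u) (inv u ≫ g₁ ≫ u) (v)) * (ω.toFun (g₁ ≫ u) (inv u ≫ g₂ ≫ u) (v) * ω.toFun (u) (inv u ≫ g₁ ≫ u) (inv u ≫ g₂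 ≫ u ≫ v))) = ((ω.toFun (g₂) (u) (v) * ω.toFun (g₁) (g₂ ≫ u) (v) * ω.toFun (g₁) (g₂) (u)) * (ω.toFun (u) (v) (inv v ≫ inv u ≫ g₂ ≫ u ≫ v) * ω.toFun (g₁) (u ≫ v) (inv v ≫ inv u ≫ g₂ ≫ u ≫ v) * ω.toFun (g₁) (u) (v)) * (ω.toFun (g₁ ≫ u) (inv u ≫ g₂ ≫ u) (v) * ω.toFun (g₁) (u) (inv u ≫ g₂ ≫ u ≫ v)) * (ω.toFun (v) (inv v ≫ inv u ≫ g₁ ≫ u ≫ v) (inv v ≫ inv u ≫ g₂ ≫ u ≫ v) * ω.toFun (u) (inv u ≫ g₁ ≫ u ≫ v) (inv v ≫ inv u ≫ g₂ ≫ u ≫ v) * ω.toFun (u) (v) (inv v ≫ inv u ≫ g₁ ≫ u ≫ v)) * (ω.toFun (g₁ ≫ u) (v) (inv v ≫ inv u ≫ g₂ ≫ u ≫ v) * ω.toFun (u) (inv u ≫ g₁ ≫ u) (inv u ≫ g₂ ≫ u ≫ v)) * (ω.toFun (inv u ≫ g₁ ≫ u) (inv u ≫ g₂ ≫ u) (v)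 * ω.toFun (u) (inv u ≫ g₁ ≫ g₂ ≫ u) (v) * ω.toFun (u) (inv u ≫ g₁ ≫ u) (inv u ≫ g₂ ≫ u))) := by
    rw [← P1, ← P2, P3, ← P4, P5, ← P6]
  have hS : ((ω.toFun (g₂) (u) (v) * ω.toFun (g₁) (g₂ ≫ u) (v) * ω.toFun (g₁) (g₂) (u)) * (ω.toFun (u) (v) (inv v ≫ inv u ≫ g₂ ≫ u ≫ v) * ω.toFun (g₁) (u ≫ v) (inv v ≫ inv u ≫ g₂ ≫ u ≫ v) * ω.toFun (g₁) (u) (v)) * (ω.toFun (g₁ ≫ u) (inv u ≫ g₂ ≫ u) (v) * ω.toFun (g₁) (u) (inv u ≫ g₂ ≫ u ≫ v)) * (ω.toFun (v) (inv v ≫ inv u ≫ g₁ ≫ u ≫ v) (inv v ≫ inv u ≫ g₂ ≫ u ≫ v) * ω.toFun (u) (inv u ≫ g₁ ≫ u ≫ v) (inv v ≫ inv u ≫ g₂ ≫ u ≫ v) * ω.toFun (u) (v) (inv v ≫ inv u ≫ g₁ ≫ u ≫ v)) * (ω.toFun (g₁ ≫ u) (v) (inv v ≫ inv u ≫ g₂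 ≫ u ≫ v) * ω.toFun (u) (inv u ≫ g₁ ≫ u) (inv u ≫ g₂ ≫ u ≫ v)) * (ω.toFun (inv u ≫ g₁ ≫ u) (inv u ≫ g₂ ≫ u) (v) * ω.toFun (u) (inv u ≫ g₁ ≫ g₂ ≫ u) (v) * ω.toFun (u) (inv u ≫ g₁ ≫ u) (inv u ≫ g₂ ≫ u))) ≠ 0 := by
    apply_rules [mul_ne_zero, tf_ne]
  have key : (ω.toFun (g₁) (g₂) (u ≫ v) * ω.toFun (u ≫ v) (inv v ≫ inv u ≫ g₁ ≫ u ≫ v) (inv v ≫ inv u ≫ g₂ ≫ u ≫ v) * ω.toFun (g₁ ≫ g₂) (u) (v) * ω.toFun (u) (v) (inv v ≫ inv u ≫ g₁ ≫ g₂ ≫ u ≫ v) * ω.toFun (u) (inv u ≫ g₁ ≫ u) (v) * ω.toFun (u) (inv u ≫ g₂ ≫ u) (v) * ω.toFun (g₁) (u) (inv u ≫ g₂ ≫ u) * ω.toFun (inv u ≫ g₁ ≫ u) (v) (inv v ≫ inv u ≫ g₂ ≫ u ≫ v)) = (ω.toFun (g₁) (u) (v) * ω.toFun (u) (v) (inv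 v ≫ inv u ≫ g₁ ≫ u ≫ v) * ω.toFun (g₂) (u) (v) * ω.toFun (u) (v) (inv v ≫ inv u ≫ g₂ ≫ u ≫ v) * ω.toFun (g₁) (g₂) (u) * ω.toFun (u) (inv u ≫ g₁ ≫ u) (inv u ≫ g₂ ≫ u) * ω.toFun (inv u ≫ g₁ ≫ u) (inv u ≫ g₂ ≫ u) (v) * ω.toFun (v) (inv v ≫ inv u ≫ g₁ ≫ u ≫ v) (inv v ≫ inv u ≫ g₂ ≫ u ≫ v) * ω.toFun (g₁) (u ≫ v) (inv v ≫ inv u ≫ g₂ ≫ u ≫ v) * ω.toFun (u) (inv u ≫ g₁ ≫ g₂ ≫ u) (v)) := by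
    have h2 : (ω.toFun (g₁) (g₂) (u ≫ v) * ω.toFun (u ≫ v) (inv v ≫ inv u ≫ g₁ ≫ u ≫ v) (inv v ≫ inv u ≫ g₂ ≫ u ≫ v) * ω.toFun (g₁ ≫ g₂) (u) (v) * ω.toFun (u) (v) (inv v ≫ inv u ≫ g₁ ≫ g₂ ≫ u ≫ v) * ω.toFun (u) (inv u ≫ g₁ ≫ u) (v) * ω.toFun (u) (inv u ≫ g₂ ≫ u) (v) * ω.toFun (g₁) (u) (inv u ≫ g₂ ≫ u) * ω.toFun (inv u ≫ g₁ ≫ u) (v) (inv v ≫ inv u ≫ g₂ ≫ u ≫ v)) * ((ω.toFun (g₂) (u) (v) * ω.toFun (g₁) (g₂ ≫ u) (v) * ω.toFun (g₁) (g₂) (u)) * (ω.toFun (u) (v) (inv v ≫ inv u ≫ g₂ ≫ u ≫ v) * ω.toFun (g₁) (u ≫ v) (inv v ≫ inv u ≫ g₂ ≫ u ≫ v) * ω.toFun (g₁) (u) (v)) * (ω.toFun (g₁ ≫ u) (inv u ≫ g₂ ≫ u) (v) * ω.toFun (g₁) (u) (inv u ≫ g₂ ≫ u ≫ v)) * (ω.toFun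 (v) (inv v ≫ inv u ≫ g₁ ≫ u ≫ v) (inv v ≫ inv u ≫ g₂ ≫ u ≫ v) * ω.toFun (u) (inv u ≫ g₁ ≫ u ≫ v) (inv v ≫ inv u ≫ g₂ ≫ u ≫ v) * ω.toFun (u) (v) (inv v ≫ inv u ≫ g₁ ≫ u ≫ v)) * (ω.toFun (g₁ ≫ u) (v) (inv v ≫ inv u ≫ g₂ ≫ u ≫ v) * ω.toFun (u) (inv u ≫ g₁ ≫ u) (inv u ≫ g₂ ≫ u ≫ v)) * (ω.toFun (inv u ≫ g₁ ≫ u) (inv u ≫ g₂ ≫ u) (v) * ω.toFun (u) (inv u ≫ g₁ ≫ g₂ ≫ u) (v) * ω.toFun (u) (inv u ≫ g₁ ≫ u) (inv u ≫ g₂ ≫ u))) = (ω.toFun (g₁) (u) (v) * ω.toFun (u) (v) (inv v ≫ inv u ≫ g₁ ≫ u ≫ v) * ω.toFun (g₂) (u) (v) * ω.toFun (u) (v) (inv v ≫ inv u ≫ g₂ ≫ u ≫ v) * ω.toFun (g₁) (g₂) (u) * ω.toFun (u) (inv u ≫ g₁ ≫ u) (inv u ≫ g₂ ≫ u) * ω.toFun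 (inv u ≫ g₁ ≫ u) (inv u ≫ g₂ ≫ u) (v) * ω.toFun (v) (inv v ≫ inv u ≫ g₁ ≫ u ≫ v) (inv v ≫ inv u ≫ g₂ ≫ u ≫ v) * ω.toFun (g₁) (u ≫ v) (inv v ≫ inv u ≫ g₂ ≫ u ≫ v) * ω.toFun (u) (inv u ≫ g₁ ≫ g₂ ≫ u) (v)) * ((ω.toFun (g₂) (u) (v) * ω.toFun (g₁) (g₂ ≫ u) (v) * ω.toFun (g₁) (g₂) (u)) * (ω.toFun (u) (v) (inv v ≫ inv u ≫ g₂ ≫ u ≫ v) * ω.toFun (g₁) (u ≫ v) (inv v ≫ inv u ≫ g₂ ≫ u ≫ v) * ω.toFun (g₁) (u) (v)) * (ω.toFun (g₁ ≫ u) (inv u ≫ g₂ ≫ u) (v) * ω.toFun (g₁) (u) (inv u ≫ g₂ ≫ u ≫ v)) * (ω.toFun (v) (inv v ≫ inv u ≫ g₁ ≫ u ≫ v) (inv v ≫ inv u ≫ g₂ ≫ u ≫ v) * ω.toFun (u) (inv u ≫ g₁ ≫ u ≫ v) (inv v ≫ inv u ≫ g₂ ≫ u ≫ v) * ω.toFun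 (u) (v) (inv v ≫ inv u ≫ g₁ ≫ u ≫ v)) * (ω.toFun (g₁ ≫ u) (v) (inv v ≫ inv u ≫ g₂ ≫ u ≫ v) * ω.toFun (u) (inv u ≫ g₁ ≫ u) (inv u ≫ g₂ ≫ u ≫ v)) * (ω.toFun (inv u ≫ g₁ ≫ u) (inv u ≫ g₂ ≫ u) (v) * ω.toFun (u) (inv u ≫ g₁ ≫ g₂ ≫ u) (v) * ω.toFun (u) (inv u ≫ g₁ ≫ u) (inv u ≫ g₂ ≫ u))) := by
      calc (ω.toFun (g₁) (g₂) (u ≫ v) * ω.toFun (u ≫ v) (inv v ≫ inv u ≫ g₁ ≫ u ≫ v) (inv v ≫ inv u ≫ g₂ ≫ u ≫ v) * ω.toFun (g₁ ≫ g₂) (u) (v) * ω.toFun (u) (v) (inv v ≫ inv u ≫ g₁ ≫ g₂ ≫ u ≫ v) * ω.toFun (u) (inv u ≫ g₁ ≫ u) (v) * ω.toFun (u) (inv u ≫ g₂ ≫ u) (v) * ω.toFun (g₁) (u) (inv u ≫ g₂ ≫ u) * ω.toFun (inv u ≫ g₁ ≫ u) (v) (inv v ≫ inv u ≫ g₂ ≫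 u ≫ v)) * ((ω.toFun (g₂) (u) (v) * ω.toFun (g₁) (g₂ ≫ u) (v) * ω.toFun (g₁) (g₂) (u)) * (ω.toFun (u) (v) (inv v ≫ inv u ≫ g₂ ≫ u ≫ v) * ω.toFun (g₁) (u ≫ v) (inv v ≫ inv u ≫ g₂ ≫ u ≫ v) * ω.toFun (g₁) (u) (v)) * (ω.toFun (g₁ ≫ u) (inv u ≫ g₂ ≫ u) (v) * ω.toFun (g₁) (u) (inv u ≫ g₂ ≫ u ≫ v)) * (ω.toFun (v) (inv v ≫ inv u ≫ g₁ ≫ u ≫ v) (inv v ≫ inv u ≫ g₂ ≫ u ≫ v) * ω.toFun (u) (inv u ≫ g₁ ≫ u ≫ v) (inv v ≫ inv u ≫ g₂ ≫ u ≫ v) * ω.toFun (u) (v) (inv v ≫ inv u ≫ g₁ ≫ u ≫ v)) * (ω.toFun (g₁ ≫ u) (v) (inv v ≫ inv u ≫ g₂ ≫ u ≫ v) * ω.toFun (u) (inv u ≫ g₁ ≫ u) (inv u ≫ g₂ ≫ u ≫ v)) * (ω.toFun (inv u ≫ g₁ ≫ u) (inv u ≫ g₂ ≫ u) (v) * ω.toFun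 (u) (inv u ≫ g₁ ≫ g₂ ≫ u) (v) * ω.toFun (u) (inv u ≫ g₁ ≫ u) (inv u ≫ g₂ ≫ u))) = (ω.toFun (g₁) (u) (v) * ω.toFun (u) (v) (inv v ≫ inv u ≫ g₁ ≫ u ≫ v) * ω.toFun (g₂) (u) (v) * ω.toFun (u) (v) (inv v ≫ inv u ≫ g₂ ≫ u ≫ v) * ω.toFun (g₁) (g₂) (u) * ω.toFun (u) (inv u ≫ g₁ ≫ u) (inv u ≫ g₂ ≫ u) * ω.toFun (inv u ≫ g₁ ≫ u) (inv u ≫ g₂ ≫ u) (v) * ω.toFun (v) (inv v ≫ inv u ≫ g₁ ≫ u ≫ v) (inv v ≫ inv u ≫ g₂ ≫ u ≫ v) * ω.toFun (g₁) (u ≫ v) (inv v ≫ inv u ≫ g₂ ≫ u ≫ v) * ω.toFun (u) (inv u ≫ g₁ ≫ g₂ ≫ u) (v)) * ((ω.toFun (g₁ ≫ g₂) (u) (v) * ω.toFun (g₁) (g₂) (u ≫ v)) * (ω.toFun (g₁ ≫ u) (v) (inv v ≫ inv u ≫ g₂ ≫ u ≫ v) * ω.toFun (g₁) (u) (inv u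 ≫ g₂ ≫ u ≫ v)) * (ω.toFun (u) (inv u ≫ g₂ ≫ u) (v) * ω.toFun (g₁) (g₂ ≫ u) (v) * ω.toFun (g₁) (u) (inv u ≫ g₂ ≫ u)) * (ω.toFun (u ≫ v) (inv v ≫ inv u ≫ g₁ ≫ u ≫ v) (inv v ≫ inv u ≫ g₂ ≫ u ≫ v) * ω.toFun (u) (v) (inv v ≫ inv u ≫ g₁ ≫ g₂ ≫ u ≫ v)) * (ω.toFun (inv u ≫ g₁ ≫ u) (v) (inv v ≫ inv u ≫ g₂ ≫ u ≫ v) * ω.toFun (u) (inv u ≫ g₁ ≫ u ≫ v) (inv v ≫ inv u ≫ g₂ ≫ u ≫ v) * ω.toFun (u) (inv u ≫ g₁ ≫ u) (v)) * (ω.toFun (g₁ ≫ u) (inv u ≫ g₂ ≫ u) (v) * ω.toFun (u) (inv u ≫ g₁ ≫ u) (inv u ≫ g₂ ≫ u ≫ v))) := by ring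
        _ = (ω.toFun (g₁) (u) (v) * ω.toFun (u) (v) (inv v ≫ inv u ≫ g₁ ≫ u ≫ v) * ω.toFun (g₂) (u) (v) * ω.toFun (u) (v) (inv v ≫ inv u ≫ g₂ ≫ u ≫ v) * ω.toFun (g₁) (g₂) (u) * ω.toFun (u) (inv u ≫ g₁ ≫ u) (inv u ≫ g₂ ≫ u) * ω.toFun (inv u ≫ g₁ ≫ u) (inv u ≫ g₂ ≫ u) (v) * ω.toFun (v) (inv v ≫ inv u ≫ g₁ ≫ u ≫ v) (inv v ≫ inv u ≫ g₂ ≫ u ≫ v) * ω.toFun (g₁) (u ≫ v) (inv v ≫ inv u ≫ g₂ ≫ u ≫ v) * ω.toFun (u) (inv u ≫ g₁ ≫ g₂ ≫ u) (v)) * ((ω.toFun (g₂) (u) (v) * ω.toFun (g₁) (g₂ ≫ u) (v) * ω.toFun (g₁) (g₂) (u)) * (ω.toFun (u) (v) (inv v ≫ inv u ≫ g₂ ≫ u ≫ v) * ω.toFun (g₁) (u ≫ v) (inv v ≫ inv u ≫ g₂ ≫ u ≫ v) * ω.toFun (g₁) (u) (v)) * (ω.toFun (g₁ ≫ u) (inv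 u ≫ g₂ ≫ u) (v) * ω.toFun (g₁) (u) (inv u ≫ g₂ ≫ u ≫ v)) * (ω.toFun (v) (inv v ≫ inv u ≫ g₁ ≫ u ≫ v) (inv v ≫ inv u ≫ g₂ ≫ u ≫ v) * ω.toFun (u) (inv u ≫ g₁ ≫ u ≫ v) (inv v ≫ inv u ≫ g₂ ≫ u ≫ v) * ω.toFun (u) (v) (inv v ≫ inv u ≫ g₁ ≫ u ≫ v)) * (ω.toFun (g₁ ≫ u) (v) (inv v ≫ inv u ≫ g₂ ≫ u ≫ v) * ω.toFun (u) (inv u ≫ g₁ ≫ u) (inv u ≫ g₂ ≫ u ≫ v)) * (ω.toFun (inv u ≫ g₁ ≫ u) (inv u ≫ g₂ ≫ u) (v) * ω.toFun (u) (inv u ≫ g₁ ≫ g₂ ≫ u) (v) * ω.toFun (u) (inv u ≫ g₁ ≫ u) (inv u ≫ g₂ ≫ u))) := by rw [H]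
    exact mul_right_cancel₀ hS h2
  simp only [gam, tOmega, cnj, Groupoid.inv_eq_inv, IsIso.inv_comp, Category.assoc,
    IsIso.hom_inv_id_assoc, IsIso.inv_hom_id_assoc, Category.comp_id, Category.id_comp]
  field_simp [tf_ne]
  linear_combination key

end Key

section Ev
variable {G : Type} [Groupoid.{0} G] [Fintype G]
    [∀ X Y : G, Fintype (X ⟶ Y)] [DecidableEq G] [∀ X Y : G, DecidableEq (X ⟶ Y)]

lemma Delta_apply_ne (ω : ThreeCocycle G) (z : LMor G → ℂ) {X₁ Y₁ X₂ Y₂ : G}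
    (g₁ : X₁ ⟶ X₁) (a₁ : X₁ ⟶ Y₁) (g₂ : X₂ ⟶ X₂) (a₂ : X₂ ⟶ Y₂)
    (hne : (⟨X₂, Y₂, a₂⟩ : Σ X Y : G, X ⟶ Y) ≠ ⟨X₁, Y₁, a₁⟩) :
    Delta ω z (⟨X₁, Y₁, (g₁, a₁)⟩, ⟨X₂, Y₂, (g₂, a₂)⟩) = 0 := by
  simp only [Delta, Finset.sum_apply, Pi.smul_apply, lbv2, smul_eq_mul, mul_ite, mul_one,
    mul_zero]
  refine Finset.sum_eq_zero fun X _ => Finset.sum_eq_zero fun Y _ =>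
    Finset.sum_eq_zero fun a _ => Finset.sum_eq_zero fun p _ =>
    Finset.sum_eq_zero fun q _ => ?_
  rw [if_neg]
  intro h
  obtain ⟨h1, h2⟩ := Prod.ext_iff.mp h
  have e1 := congrArg (fun r : LMor G => (⟨r.1, r.2.1, r.2.2.2⟩ : Σ X Y : G, X ⟶ Y)) h1
  have e2 := congrArg (fun r : LMor G => (⟨r.1, r.2.1, r.2.2.2⟩ : Σ X Y : G, X ⟶ Y)) h2
  exact hne (e2.trans e1.symm)

lemma Delta_apply_same (ω : ThreeCocycle G) (z : LMor G → ℂ) {X Y : G}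
    (g₁ g₂ : X ⟶ X) (a : X ⟶ Y) :
    Delta ω z (⟨X, Y, (g₁, a)⟩, ⟨X, Y, (g₂, a)⟩)
      = gam ω a g₁ g₂ * z ⟨X, Y, (g₁ ≫ g₂, a)⟩ := by
  simp only [Delta, Finset.sum_apply, Pi.smul_apply, lbv2, smul_eq_mul, mul_ite, mul_one,
    mul_zero]
  rw [Finset.sum_eq_single X, Finset.sum_eq_single Y, Finset.sum_eq_single a,
    Finset.sum_eq_single g₁, Finset.sum_eq_single g₂, if_pos rfl]
  · intro b _ hb
    rw [if_neg]
    intro h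
    obtain ⟨-, h2⟩ := Prod.ext_iff.mp h
    simp at h2
    exact hb h2.symm
  · exact fun h => absurd (Finset.mem_univ _) h
  · intro b _ hb
    refine Finset.sum_eq_zero fun q _ => ?_
    rw [if_neg]
    intro h
    obtain ⟨h1, -⟩ := Prod.ext_iff.mp h
    simp at h1
    exact hb h1.symm
  · exact fun h => absurd (Finset.mem_univ _) h
  · intro b _ hb
    refine Finset.sum_eq_zero fun p _ => Finset.sum_eq_zero fun q _ => ?_
    rw [if_neg]
    intro h
    obtain ⟨h1, -⟩ := Prod.ext_iff.mp h
    simp at h1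
    exact hb h1.2.symm
  · exact fun h => absurd (Finset.mem_univ _) h
  · intro b _ hb
    refine Finset.sum_eq_zero fun a' _ => Finset.sum_eq_zero fun p _ =>
      Finset.sum_eq_zero fun q _ => ?_
    rw [if_neg]
    intro h
    obtain ⟨h1, -⟩ := Prod.ext_iff.mp h
    have := eq_of_heq (Sigma.ext_iff.mp h1).2
    exact hb (Sigma.ext_iff.mp this).1.symm
  · exact fun h => absurd (Finset.mem_univ _) h
  · intro b _ hb
    refine Finset.sum_eq_zero fun Y' _ => Finset.sum_eq_zero fun a' _ =>
      Finset.sum_eq_zero fun p _ => Finset.sum_eq_zero fun q _ => ?_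
    rw [if_neg]
    intro h
    obtain ⟨h1, -⟩ := Prod.ext_iff.mp h
    exact hb (Sigma.ext_iff.mp h1).1.symm
  · exact fun h => absurd (Finset.mem_univ _) h

end Ev

/-- The comultiplication `Δ` of the twisted groupoid algebra
`A = ℂ[Λ𝒢]^{t(ω)}` is multiplicative: `Δ(x ⋆ y) = Δ(x) ⋆ Δ(y)` in `A ⊗_ℂ A` with the
componentwise product. -/
theorem Delta_multiplicative
    (G : Type) [Groupoid.{0} G] [Fintype G] [∀ X Y : G, Fintype (X ⟶ Y)]
    [DecidableEq G] [∀ X Y : G, DecidableEq (X ⟶ Y)]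
    (ω : ThreeCocycle G) (x y : LMor G → ℂ) :
    Delta ω (lmul ω x y) = lmul2 ω (Delta ω x) (Delta ω y) := by
  funext m
  obtain ⟨⟨X₁, Y₁, G₁, A₁⟩, ⟨X₂, Y₂, G₂, A₂⟩⟩ := m
  by_cases hX : X₁ = X₂
  · subst hX
    by_cases hY : Y₁ = Y₂
    · subst hY
      by_cases hA : A₁ = A₂
      · subst hA
        rw [Delta_apply_same]
        simp only [lmul, lmul2, Finset.mul_sum]
        refine Finset.sum_congr rfl fun Z _ => Finset.sum_congr rfl fun a _ =>
          Finset.sum_congr rfl fun b _ => ?_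
        rw [Finset.sum_eq_single Z, Finset.sum_eq_single a, Finset.sum_eq_single b]
        · rw [Delta_apply_same, Delta_apply_same]
          by_cases h : a ≫ b = A₁
          · subst h
            rw [cnj_mul]
            simp only [eq_self_iff_true, if_true]
            linear_combination
              (x ⟨X₁, Z, (G₁ ≫ G₂, a)⟩ * y ⟨Z, Y₁, (cnj G₁ a ≫ cnj G₂ a, b)⟩) *
                keyid ω a b G₁ G₂
          · simp [h]
        · intro b' _ hb
          rw [Delta_apply_ne ω y (cnj G₁ a) b (cnj G₂ a) b'
            (fun h => hb (by simpa using h))]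
          ring
        · exact fun h => absurd (Finset.mem_univ _) h
        · intro a' _ ha
          refine Finset.sum_eq_zero fun b' _ => ?_
          rw [Delta_apply_ne ω x G₁ a G₂ a' (fun h => ha (by simpa using h))]
          ring
        · exact fun h => absurd (Finset.mem_univ _) h
        · intro Z' _ hZ
          refine Finset.sum_eq_zero fun a' _ => Finset.sum_eq_zero fun b' _ => ?_
          rw [Delta_apply_ne ω x G₁ a G₂ a'
            (fun h => hZ (Sigma.ext_iff.mp (eq_of_heq (Sigma.ext_iff.mp h).2)).1)]
          ring
        · exact fun h => absurd (Finset.mem_univ _) h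
      · rw [Delta_apply_ne ω _ G₁ A₁ G₂ A₂
          (fun h => hA (by simpa using h.symm))]
        symm
        simp only [lmul2]
        refine Finset.sum_eq_zero fun Z₁ _ => Finset.sum_eq_zero fun a₁ _ =>
          Finset.sum_eq_zero fun b₁ _ => Finset.sum_eq_zero fun Z₂ _ =>
          Finset.sum_eq_zero fun a₂ _ => Finset.sum_eq_zero fun b₂ _ => ?_
        by_cases hZ : Z₁ = Z₂
        · subst hZ
          by_cases ha : a₁ = a₂
          · subst ha
            by_cases hb : b₁ = b₂
            · subst hb
              by_cases h1 : a₁ ≫ b₁ = A₁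
              · rw [if_neg (fun h => hA (h1.symm.trans h))]
                ring
              · rw [if_neg h1]
                ring
            · rw [Delta_apply_ne ω y (cnj G₁ a₁) b₁ (cnj G₂ a₁) b₂
                (fun h => hb (by simpa using h.symm))]
              ring
          · rw [Delta_apply_ne ω x G₁ a₁ G₂ a₂ (fun h => ha (by simpa using h.symm))]
            ring
        · rw [Delta_apply_ne ω x G₁ a₁ G₂ a₂
            (fun h => hZ (Sigma.ext_iff.mp (eq_of_heq (Sigma.ext_iff.mp h).2)).1.symm)]
          ring
    · rw [Delta_apply_ne ω _ G₁ A₁ G₂ A₂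
        (fun h => hY (Sigma.ext_iff.mp (eq_of_heq (Sigma.ext_iff.mp h).2)).1.symm)]
      symm
      simp only [lmul2]
      refine Finset.sum_eq_zero fun Z₁ _ => Finset.sum_eq_zero fun a₁ _ =>
        Finset.sum_eq_zero fun b₁ _ => Finset.sum_eq_zero fun Z₂ _ =>
        Finset.sum_eq_zero fun a₂ _ => Finset.sum_eq_zero fun b₂ _ => ?_
      by_cases hZ : Z₁ = Z₂
      · subst hZ
        rw [Delta_apply_ne ω y (cnj G₁ a₁) b₁ (cnj G₂ a₂) b₂
          (fun h => hY (Sigma.ext_iff.mp (eq_of_heq (Sigma.ext_iff.mp h).2)).1.symm)]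
        ring
      · rw [Delta_apply_ne ω x G₁ a₁ G₂ a₂
          (fun h => hZ (Sigma.ext_iff.mp (eq_of_heq (Sigma.ext_iff.mp h).2)).1.symm)]
        ring
  · rw [Delta_apply_ne ω _ G₁ A₁ G₂ A₂ (fun h => hX (Sigma.ext_iff.mp h).1.symm)]
    symm
    simp only [lmul2]
    refine Finset.sum_eq_zero fun Z₁ _ => Finset.sum_eq_zero fun a₁ _ =>
      Finset.sum_eq_zero fun b₁ _ => Finset.sum_eq_zero fun Z₂ _ =>
      Finset.sum_eq_zero fun a₂ _ => Finset.sum_eq_zero fun b₂ _ => ?_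
    rw [Delta_apply_ne ω x G₁ a₁ G₂ a₂ (fun h => hX (Sigma.ext_iff.mp h).1.symm)]
    ring
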